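/- Let A = ℚ[π] be the group algebra of a group π with augmentation ideal I, and let η : A × A → A be a Fox pairing, i.e. a ℚ-bilinear map satisfying η(ab,c) = a·η(b,c) + ε(b)·η(a,c) and η(a,bc) = η(a,b)·c + ε(b)·η(a,c) for all a,b,c ∈ A, where ε is the augmentation. Then for all integers m,n ≥ 1, η(I^m, I^n) ⊆ I^{m+n-2} (with the convention I^0 = I^{-1} = I^{-2} = A). -/

import Mathlib

/-- The augmentation homomorphism of the rational group algebra,
sending every group element to `1`. -/
noncomputable def aug (G : Type*) [Group G] : MonoidAlgebra ℚ G →ₐ[ℚ] ℚ :=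
  MonoidAlgebra.lift ℚ ℚ G 1

/-- The augmentation ideal `I = ker ε`, as a `ℚ`-submodule of the group algebra. -/
noncomputable def augIdeal (G : Type*) [Group G] : Submodule ℚ (MonoidAlgebra ℚ G) :=
  LinearMap.ker (aug G).toLinearMap

/-- Powers of the augmentation ideal, with the convention `I^0 = A` (the whole algebra). -/
noncomputable def augIdealPow (G : Type*) [Group G] : ℕ → Submodule ℚ (MonoidAlgebra ℚ G)
  | 0 => ⊤
  | (m + 1) => (augIdeal G) ^ (m + 1)

lemma mem_augIdeal_iff {G : Type*} [Group G] {x : MonoidAlgebra ℚ G} :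
    x ∈ augIdeal G ↔ aug G x = 0 := by
  simp [augIdeal, LinearMap.mem_ker]

lemma aug_pow_zero {G : Type*} [Group G] :
    ∀ k, ∀ x ∈ (augIdeal G) ^ (k + 1), aug G x = 0 := by
  intro k
  induction k with
  | zero => intro x hx; rw [pow_one] at hx; exact mem_augIdeal_iff.mp hx
  | succ j ih =>
      intro x hx
      rw [pow_succ] at hx
      refine Submodule.mul_induction_on hx (fun u hu v hv => ?_)
        (fun y z hy hz => by rw [map_add, hy, hz, add_zero])
      rw [map_mul, mem_augIdeal_iff.mp hv, mul_zero]

lemma pow_mul_any {G : Type*} [Group G] :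
    ∀ k, ∀ x ∈ (augIdeal G) ^ (k + 1), ∀ w : MonoidAlgebra ℚ G,
      x * w ∈ (augIdeal G) ^ (k + 1) := by
  intro k x hx w
  rw [pow_succ] at hx ⊢
  refine Submodule.mul_induction_on hx (fun u hu v hv => ?_)
    (fun y z hy hz => by rw [add_mul]; exact add_mem hy hz)
  rw [mul_assoc]
  exact Submodule.mul_mem_mul hu
    (mem_augIdeal_iff.mpr (by rw [map_mul, mem_augIdeal_iff.mp hv, zero_mul]))

lemma mul_right_step {G : Type*} [Group G] :
    ∀ k, ∀ x ∈ augIdealPow G k, ∀ z ∈ augIdeal G,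
      x * z ∈ augIdealPow G (k + 1) := by
  intro k x hx z hz
  cases k with
  | zero =>
      show x * z ∈ (augIdeal G) ^ 1
      rw [pow_one]
      exact mem_augIdeal_iff.mpr (by rw [map_mul, mem_augIdeal_iff.mp hz, mul_zero])
  | succ j =>
      show x * z ∈ (augIdeal G) ^ (j + 1 + 1)
      rw [pow_succ]
      exact Submodule.mul_mem_mul hx hz

lemma mul_left_pow {G : Type*} [Group G] :
    ∀ m k, ∀ x ∈ (augIdeal G) ^ (m + 1), ∀ w ∈ augIdealPow G k,
      x * w ∈ augIdealPow G (m + 1 + k) := by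
  intro m k x hx w hw
  cases k with
  | zero => exact pow_mul_any m x hx w
  | succ j =>
      show x * w ∈ (augIdeal G) ^ (m + 1 + (j + 1))
      rw [pow_add]
      exact Submodule.mul_mem_mul hx hw

lemma fox_base {G : Type*} [Group G]
    (η : MonoidAlgebra ℚ G →ₗ[ℚ] MonoidAlgebra ℚ G →ₗ[ℚ] MonoidAlgebra ℚ G)
    (hfox2 : ∀ a b c : MonoidAlgebra ℚ G,
      η a (b * c) = η a b * c + aug G b • η a c) :
    ∀ n, ∀ a ∈ augIdeal G, ∀ b ∈ (augIdeal G) ^ (n + 1),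
      η a b ∈ augIdealPow G n := by
  intro n
  induction n with
  | zero => intro a _ b _; exact Submodule.mem_top
  | succ j ih =>
      intro a ha b hb
      rw [pow_succ] at hb
      refine Submodule.mul_induction_on hb (fun y hy z hz => ?_)
        (fun u v hu hv => by rw [map_add]; exact add_mem hu hv)
      rw [hfox2, aug_pow_zero j y hy, zero_smul, add_zero]
      exact mul_right_step j _ (ih a ha y hy) z hz

/-- For a Fox pairing `η` on `ℚ[π]`, one has `η(I^m, I^n) ⊆ I^{m+n-2}` for all `m, n ≥ 1`. -/
theorem fox_pairing_filtration (G : Type*) [Group G]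
    (η : MonoidAlgebra ℚ G →ₗ[ℚ] MonoidAlgebra ℚ G →ₗ[ℚ] MonoidAlgebra ℚ G)
    (hfox1 : ∀ a b c : MonoidAlgebra ℚ G,
      η (a * b) c = a * η b c + aug G b • η a c)
    (hfox2 : ∀ a b c : MonoidAlgebra ℚ G,
      η a (b * c) = η a b * c + aug G b • η a c)
    (m n : ℕ) (hm : 1 ≤ m) (hn : 1 ≤ n) :
    ∀ a ∈ (augIdeal G) ^ m, ∀ b ∈ (augIdeal G) ^ n,
      η a b ∈ augIdealPow G (m + n - 2) := by
  obtain ⟨m', rfl⟩ : ∃ m', m = m' + 1 := ⟨m - 1, by omega⟩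
  obtain ⟨n', rfl⟩ : ∃ n', n = n' + 1 := ⟨n - 1, by omega⟩
  have hidx : m' + 1 + (n' + 1) - 2 = m' + n' := by omega
  rw [hidx]
  clear hm hn hidx
  induction m' with
  | zero =>
      intro a ha b hb
      rw [pow_one] at ha
      simpa using fox_base η hfox2 n' a ha b hb
  | succ j ih =>
      intro a ha b hb
      rw [pow_succ] at ha
      refine Submodule.mul_induction_on ha (fun x hx y hy => ?_)
        (fun u v hu hv => by rw [map_add, LinearMap.add_apply]; exact add_mem hu hv)
      rw [hfox1, mem_augIdeal_iff.mp hy, zero_smul, add_zero]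
      have h1 : η y b ∈ augIdealPow G n' := fox_base η hfox2 n' y hy b hb
      exact mul_left_pow j n' x hx (η y b) h1
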